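/- Let H be symmetric positive definite, w* ∈ ℝ^d, i an index, and let w' = w* + δ* where δ* = −(w*_i/(H⁻¹)_{ii}) H⁻¹e_i is the OBS update after pruning weight i. Then for any other vector w'' with w''_i = 0, (1/2)(w''−w*)ᵀH(w''−w*) ≥ (1/2)(w'−w*)ᵀH(w'−w*) = w*_i²/(2(H⁻¹)_{ii}), with equality iff w'' = w'. -/

import Mathlib

open Matrix

/-- Optimality and uniqueness of the OBS single-weight update: among all vectors
`w''` with `w''ᵢ = 0`, the OBS-updated vector `w' = w* + δ*` uniquely minimizes
the quadratic loss increase `(1/2)(w - w*)ᵀ H (w - w*)`, whose value at `w'` is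
`w*ᵢ² / (2 (H⁻¹)ᵢᵢ)`. -/
theorem obs_update_optimal_unique {d : ℕ} (H : Matrix (Fin d) (Fin d) ℝ)
    (hH : H.PosDef) (w : Fin d → ℝ) (i : Fin d) :
    let δstar : Fin d → ℝ := (-(w i / H⁻¹ i i)) • H⁻¹.mulVec (Pi.single i 1)
    let w' : Fin d → ℝ := w + δstar
    (1 / 2 : ℝ) * ((w' - w) ⬝ᵥ H.mulVec (w' - w)) = (w i) ^ 2 / (2 * H⁻¹ i i) ∧
    ∀ w'' : Fin d → ℝ, w'' i = 0 →
      ((w i) ^ 2 / (2 * H⁻¹ i i) ≤ (1 / 2 : ℝ) * ((w'' - w) ⬝ᵥ H.mulVec (w'' - w)) ∧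
        ((1 / 2 : ℝ) * ((w'' - w) ⬝ᵥ H.mulVec (w'' - w)) =
            (w i) ^ 2 / (2 * H⁻¹ i i) ↔ w'' = w')) := by
  intro δstar w'
  set A := H⁻¹ with hA
  have hApd : A.PosDef := hH.inv
  have hdet : IsUnit H.det := isUnit_iff_ne_zero.2 (ne_of_gt hH.det_pos)
  have hHA : H * A = 1 := Matrix.mul_nonsing_inv H hdet
  have hHsym : Hᵀ = H := hH.1.eq
  have hc : 0 < A i i := by
    have := hApd.dotProduct_mulVec_pos (x := Pi.single i 1) (by simp [Pi.single_eq_same, funext_iff]; exact ⟨i, by simp⟩)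
    simpa [dotProduct_single, Matrix.mulVec_single] using this
  have hcne : A i i ≠ 0 := ne_of_gt hc
  -- cross term lemma
  have cross : ∀ z : Fin d → ℝ, δstar ⬝ᵥ H.mulVec z = -(w i / A i i) * z i := by
    intro z
    have h1 : (A.mulVec (Pi.single i 1)) ⬝ᵥ H.mulVec z = z i := by
      rw [Matrix.dotProduct_mulVec, ← Matrix.mulVec_transpose, hHsym,
        Matrix.mulVec_mulVec, hHA, Matrix.one_mulVec, single_dotProduct, one_mul]
    simp only [δstar, smul_dotProduct, smul_eq_mul, ← hA, h1]
  have cross' : ∀ z : Fin d → ℝ, z ⬝ᵥ H.mulVec δstar = -(w i / A i i) * z i := by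
    intro z
    rw [Matrix.dotProduct_mulVec, ← Matrix.mulVec_transpose, hHsym, dotProduct_comm]
    exact cross z
  have hδi : δstar i = -(w i) := by
    simp only [δstar, Pi.smul_apply, Matrix.mulVec_single, mul_one, smul_eq_mul, neg_mul]
    simp only [Matrix.col_apply, MulOpposite.op_one, one_smul]
    rw [← hA, div_mul_cancel₀ _ hcne]
  have hquad : δstar ⬝ᵥ H.mulVec δstar = w i ^ 2 / A i i := by
    rw [cross δstar, hδi]
    field_simp
  have hw'i : w' i = 0 := by simp [w', hδi]
  have hval : (1 / 2 : ℝ) * ((w' - w) ⬝ᵥ H.mulVec (w' - w)) = (w i) ^ 2 / (2 * A i i) := by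
    have : w' - w = δstar := by simp [w']
    rw [this, hquad]; ring
  refine ⟨hval, ?_⟩
  intro w'' hwi
  set u := w'' - w' with hu
  have hui : u i = 0 := by simp [hu, hwi, hw'i]
  have hsplit : w'' - w = δstar + u := by simp [hu, w']; abel
  have hexp : (w'' - w) ⬝ᵥ H.mulVec (w'' - w)
      = w i ^ 2 / A i i + u ⬝ᵥ H.mulVec u := by
    rw [hsplit, add_dotProduct, Matrix.mulVec_add, dotProduct_add,
      dotProduct_add, hquad, cross u, cross' u, hui]
    ring
  have hunn : 0 ≤ u ⬝ᵥ H.mulVec u := by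
    simpa using hH.posSemidef.dotProduct_mulVec_nonneg u
  constructor
  · rw [hexp]
    have : (w i) ^ 2 / (2 * A i i) = (1/2 : ℝ) * (w i ^ 2 / A i i) := by ring
    rw [this]
    nlinarith
  · constructor
    · intro h
      rw [hexp] at h
      have h0 : u ⬝ᵥ H.mulVec u = 0 := by
        have : (w i) ^ 2 / (2 * A i i) = (1/2 : ℝ) * (w i ^ 2 / A i i) := by ring
        rw [this] at h; linarith
      have : u = 0 := by
        by_contra hne
        have := hH.dotProduct_mulVec_pos hne
        rw [show star u = u from rfl] at this
        exact absurd h0 (ne_of_gt this)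
      have : w'' = w' := by rwa [hu, sub_eq_zero] at this
      exact this
    · intro h
      subst h
      rw [hexp, show u = 0 by simp [hu]]
      simp
      ring
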